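/- For real c with 0 < c ≤ 1/e, let s*(c) be the smallest solution of s e^{-s} = c. Then F(s, c) = ∫₀^s du/(c e^u − u) is strictly increasing in s on (−∞, s*(c)), with F(s, c) → −∞ as s → −∞ and F(s, c) → +∞ as s → s*(c)−. -/

import Mathlib

open MeasureTheory Real Filter

/-- For `0 < c ≤ 1/e`, with `s*` the smallest solution of `s e^{-s} = c`:
`s ↦ F(s,c) = ∫₀^s du/(c e^u − u)` is strictly increasing on `(−∞, s*)`, tends
to `−∞` as `s → −∞`, and tends to `+∞` as `s → s*−`. -/
theorem F_middle_branch (c sstar : ℝ) (hc0 : 0 < c) (hc1 : c ≤ (Real.exp 1)⁻¹)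
    (hstar : sstar * Real.exp (-sstar) = c)
    (hmin : ∀ s : ℝ, s * Real.exp (-s) = c → sstar ≤ s) :
    StrictMonoOn (fun s : ℝ => ∫ u in (0:ℝ)..s, (c * Real.exp u - u)⁻¹)
      (Set.Iio sstar) ∧
    Tendsto (fun s : ℝ => ∫ u in (0:ℝ)..s, (c * Real.exp u - u)⁻¹) atBot atBot ∧
    Tendsto (fun s : ℝ => ∫ u in (0:ℝ)..s, (c * Real.exp u - u)⁻¹)
      (nhdsWithin sstar (Set.Iio sstar)) atTop := by
  have hs0 : 0 < sstar := by
    by_contra h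
    push_neg at h
    nlinarith [Real.exp_pos (-sstar)]
  -- c * exp sstar = sstar
  have hgs : c * Real.exp sstar = sstar := by
    rw [← hstar, Real.exp_neg]
    field_simp
  -- positivity of the denominator on Iio sstar
  have hgpos : ∀ u : ℝ, u < sstar → 0 < c * Real.exp u - u := by
    intro u hu
    rcases le_or_gt u 0 with h | h
    · nlinarith [Real.exp_pos u]
    · by_contra hle
      push_neg at hle
      have hcont : ContinuousOn (fun t => c * Real.exp t - t) (Set.Icc 0 u) := by
        fun_prop
      have h0 : (0:ℝ) ∈ Set.Icc ((fun t => c * Real.exp t - t) u)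
          ((fun t => c * Real.exp t - t) 0) := by
        simp only [Real.exp_zero, mul_one]
        constructor <;> simp <;> linarith
      obtain ⟨t, ht, hft⟩ := intermediate_value_Icc' h.le hcont h0
      have hct : c * Real.exp t = t := by
        simp only at hft; linarith
      have hroot : t * Real.exp (-t) = c := by
        rw [Real.exp_neg]
        field_simp
        linarith [hct]
      have h1 := hmin t hroot
      have h2 : t ≤ u := ht.2
      linarith
  -- integrability
  have hInt : ∀ a b : ℝ, a < sstar → b < sstar →
      IntervalIntegrable (fun u : ℝ => (c * Real.exp u - u)⁻¹) volume a b := by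
    intro a b ha hb
    apply ContinuousOn.intervalIntegrable
    apply ContinuousOn.inv₀
    · fun_prop
    · intro x hx
      have hx' : x < sstar := lt_of_le_of_lt hx.2 (max_lt ha hb)
      exact (hgpos x hx').ne'
  refine ⟨?_, ?_, ?_⟩
  · -- strict monotonicity
    intro a ha b hb hab
    simp only [Set.mem_Iio] at ha hb
    have h1 := hInt 0 a hs0 ha
    have h2 := hInt a b ha hb
    have hpos : 0 < ∫ u in a..b, (c * Real.exp u - u)⁻¹ := by
      apply intervalIntegral.intervalIntegral_pos_of_pos_on h2 _ hab
      intro x hx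
      exact inv_pos.2 (hgpos x (hx.2.trans hb))
    have hadd := intervalIntegral.integral_add_adjacent_intervals h1 h2
    simp only
    linarith
  · -- atBot
    have hBtop : Tendsto (fun s : ℝ => Real.log (c - s)) atBot atTop := by
      apply Real.tendsto_log_atTop.comp
      have : Tendsto (fun s : ℝ => -s) atBot atTop := tendsto_neg_atBot_atTop
      exact (tendsto_atTop_add_const_left atBot c this).congr (fun s => by ring)
    have hB : Tendsto (fun s : ℝ => Real.log c - Real.log (c - s)) atBot atBot := by
      exact (tendsto_atBot_add_const_left atBot (Real.log c) (tendsto_neg_atTop_atBot.comp hBtop)).congr (fun s => by simp only [Function.comp_apply]; ring)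
    apply tendsto_atBot_mono' atBot _ hB
    rw [Filter.EventuallyLE, eventually_atBot]
    refine ⟨0, fun s hs => ?_⟩
    rw [intervalIntegral.integral_symm]
    have hIg := hInt s 0 (lt_of_le_of_lt hs hs0) hs0
    have hIf : IntervalIntegrable (fun u : ℝ => (c - u)⁻¹) volume s 0 := by
      apply ContinuousOn.intervalIntegrable
      apply ContinuousOn.inv₀
      · fun_prop
      · intro x hx
        have : x ≤ 0 := hx.2.trans (by simp [hs])
        nlinarith
    have hmono : ∫ u in s..0, (c - u)⁻¹ ≤ ∫ u in s..0, (c * Real.exp u - u)⁻¹ := by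
      apply intervalIntegral.integral_mono_on hs hIf hIg
      intro x hx
      have hx0 : x ≤ 0 := hx.2
      have h1 : 0 < c * Real.exp x - x := hgpos x (lt_of_le_of_lt hx0 hs0)
      have h2 : c * Real.exp x - x ≤ c - x := by
        nlinarith [Real.exp_le_one_iff.mpr hx0, Real.exp_pos x]
      exact inv_anti₀ h1 h2
    have hcomp : ∫ u in s..0, (c - u)⁻¹ = Real.log (c - s) - Real.log c := by
      rw [show (fun u : ℝ => (c - u)⁻¹) = fun u : ℝ => (fun x : ℝ => x⁻¹) (c - u) from rfl,
        intervalIntegral.integral_comp_sub_left (fun x : ℝ => x⁻¹) c]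
      rw [integral_inv]
      · rw [sub_zero, Real.log_div (by linarith) hc0.ne']
      · intro h0
        rw [Set.uIcc_of_le (by linarith : c - 0 ≤ c - s)] at h0
        have := h0.1
        linarith
    linarith
  ·
    -- chord bound via convexity
    have hconv : ConvexOn ℝ Set.univ (fun u : ℝ => c * Real.exp u - u) := by
      have h1 : ConvexOn ℝ Set.univ (fun u : ℝ => c * Real.exp u) := by
        simpa [smul_eq_mul] using convexOn_exp.smul hc0.le
      have h2 : ConvexOn ℝ Set.univ (fun u : ℝ => -u) :=
        ⟨convex_univ, fun x _ y _ a b _ _ _ => le_of_eq (by simp [smul_eq_mul]; ring)⟩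
      rw [show (fun u : ℝ => c * Real.exp u - u) = (fun u : ℝ => c * Real.exp u) + (fun u : ℝ => -u) from by ext; simp [sub_eq_add_neg]]
      exact h1.add h2
    have hchord : ∀ u ∈ Set.Icc (0:ℝ) sstar,
        c * Real.exp u - u ≤ c * (sstar - u) / sstar := by
      intro u hu
      have hab : (0:ℝ) ≤ 1 - u / sstar := by
        rw [sub_nonneg, div_le_one hs0]; exact hu.2
      have hb : (0:ℝ) ≤ u / sstar := div_nonneg hu.1 hs0.le
      have := hconv.2 (Set.mem_univ (0:ℝ)) (Set.mem_univ sstar) hab hb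
        (by ring : (1 - u / sstar) + u / sstar = 1)
      simp only [smul_eq_mul, mul_zero, Real.exp_zero, mul_one, zero_add] at this
      have heq : u / sstar * sstar = u := div_mul_cancel₀ u hs0.ne'
      rw [heq, hgs] at this
      have hr : c * (sstar - u) / sstar
          = (1 - u / sstar) * (c - 0) + u / sstar * (sstar - sstar) := by
        field_simp; ring
      rw [hr]
      exact this
    -- the lower bound function
    set B : ℝ → ℝ := fun s => (sstar / c) * (Real.log sstar - Real.log (sstar - s))
      with hBdef
    have hBtop : Tendsto B (nhdsWithin sstar (Set.Iio sstar)) atTop := by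
      apply Tendsto.const_mul_atTop (by positivity : (0:ℝ) < sstar / c)
      have hlog : Tendsto (fun s : ℝ => Real.log (sstar - s))
          (nhdsWithin sstar (Set.Iio sstar)) atBot := by
        apply Real.tendsto_log_nhdsGT_zero.comp
        apply tendsto_nhdsWithin_of_tendsto_nhds_of_eventually_within
        · have : Tendsto (fun s : ℝ => sstar - s) (nhds sstar) (nhds (sstar - sstar)) :=
            (tendsto_const_nhds.sub tendsto_id)
          simpa using this.mono_left nhdsWithin_le_nhds
        · filter_upwards [eventually_mem_nhdsWithin] with s hs
          simp only [Set.mem_Iio] at hs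
          simp [Set.mem_Ioi]; linarith
      have h5 := tendsto_atTop_add_const_left _ (Real.log sstar)
        (tendsto_neg_atBot_atTop.comp hlog)
      exact h5.congr (fun s => by simp [Function.comp, sub_eq_add_neg])
    apply tendsto_atTop_mono' _ _ hBtop
    filter_upwards [eventually_mem_nhdsWithin,
      eventually_nhdsWithin_of_eventually_nhds (eventually_gt_nhds hs0)] with s hsl hsg
    simp only [Set.mem_Iio] at hsl
    -- B s ≤ F s
    have hIf : IntervalIntegrable (fun u : ℝ => (sstar / c) * (sstar - u)⁻¹) volume 0 s := by
      apply ContinuousOn.intervalIntegrable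
      apply ContinuousOn.mul continuousOn_const
      apply ContinuousOn.inv₀
      · fun_prop
      · intro x hx
        rw [Set.uIcc_of_le hsg.le] at hx
        have : x < sstar := lt_of_le_of_lt hx.2 hsl
        intro h; linarith [this, sub_eq_zero.mp h]
    have hIg := hInt 0 s hs0 hsl
    have hmono : ∫ u in (0:ℝ)..s, (sstar / c) * (sstar - u)⁻¹
        ≤ ∫ u in (0:ℝ)..s, (c * Real.exp u - u)⁻¹ := by
      apply intervalIntegral.integral_mono_on hsg.le hIf hIg
      intro x hx
      have hx1 : 0 ≤ x := hx.1
      have hx2 : x < sstar := lt_of_le_of_lt hx.2 hsl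
      have h1 : 0 < c * Real.exp x - x := hgpos x hx2
      have h2 : c * Real.exp x - x ≤ c * (sstar - x) / sstar :=
        hchord x ⟨hx1, hx2.le⟩
      have h3 : (c * (sstar - x) / sstar)⁻¹ ≤ (c * Real.exp x - x)⁻¹ :=
        inv_anti₀ h1 h2
      have hne : sstar - x ≠ 0 := sub_ne_zero.mpr (ne_of_gt hx2)
      have h4 : (c * (sstar - x) / sstar)⁻¹ = (sstar / c) * (sstar - x)⁻¹ := by
        field_simp
      rw [h4] at h3
      exact h3
    have hcomp : ∫ u in (0:ℝ)..s, (sstar / c) * (sstar - u)⁻¹ = B s := by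
      rw [intervalIntegral.integral_const_mul]
      rw [show (fun u : ℝ => (sstar - u)⁻¹) = fun u : ℝ => (fun x : ℝ => x⁻¹) (sstar - u)
        from rfl, intervalIntegral.integral_comp_sub_left (fun x : ℝ => x⁻¹) sstar]
      rw [integral_inv]
      · rw [hBdef]
        simp only [sub_zero]
        rw [Real.log_div (by positivity) (by intro h; linarith [sub_eq_zero.mp h])]
      · intro h0
        rw [Set.uIcc_of_le (by linarith : sstar - s ≤ sstar - 0)] at h0
        have := h0.1
        simp at this
        linarith
    linarith [hcomp ▸ hmono]
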